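/- Let λ ≥ 2 be a real number and n a natural number such that (π/4)λ − 2√λ + 2 < n and n ≤ (π/5.783)·λ + 4√λ. Then n ≤ 519. -/

import Mathlib

open Real

theorem stmt_8 (lam : ℝ) (n : ℕ) (hlam : 2 ≤ lam)
    (h1 : π / 4 * lam - 2 * Real.sqrt lam + 2 < (n : ℝ))
    (h2 : (n : ℝ) ≤ π / 5.783 * lam + 4 * Real.sqrt lam) :
    n ≤ 519 := by
  set s := Real.sqrt lam with hs
  have hs0 : 0 ≤ s := Real.sqrt_nonneg lam
  have hs2 : s ^ 2 = lam := Real.sq_sqrt (by linarith)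
  have hπl : (3.141592 : ℝ) < π := pi_gt_d6
  have hπu : π < 3.141593 := pi_lt_d6
  have hcomb : π / 4 * lam - π / 5.783 * lam < 6 * s - 2 := by linarith
  have hpl : 3.141592 * lam ≤ π * lam :=
    mul_le_mul_of_nonneg_right hπl.le (by linarith)
  have hpu : π * lam ≤ 3.141593 * lam :=
    mul_le_mul_of_nonneg_right hπu.le (by linarith)
  have hc2 : π / 4 * lam - π / 5.783 * lam = (1783 / 23132) * (π * lam) := by ring
  have hc3 : π / 5.783 * lam = (1000 / 5783) * (π * lam) := by ring
  rw [hc2] at hcomb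
  rw [hc3] at h2
  have hsb : s < 25 := by
    by_contra h
    push_neg at h
    have hsq : 50 * s - 625 ≤ lam := by nlinarith [sq_nonneg (s - 25)]
    linarith
  have hlam625 : lam < 625 := by nlinarith
  have : (n : ℝ) ≤ 519 := by linarith
  exact_mod_cast this
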